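/- Let B be a standard graded artinian k-algebra, let A = B ⊗_k k[x]/(x²), let ℓ̄ ∈ B₁ be a linear form and ℓ = ℓ̄ + x ∈ A₁. Fix i ≥ 0 and t ≥ 1, and assume t is invertible in k. (1) If i = 0, then ·ℓ^t : A₀ → A_t has full rank if and only if ·ℓ̄^{t−1} : B₀ → B_{t−1} has full rank. (2) If i > 0 and B_{i+t} = 0, then ·ℓ^t : A_i → A_{i+t} has full rank if and only if ·ℓ̄^{t−1} : B_i → B_{i+t−1} is surjective. (3) If i = 0, B_t = 0 and dim_k B_{t−1} = 1, then the matrix M₀^t representing ·ℓ^t : A₀ → A_t is square and det(M₀^t) = t · det(M̄₀^{t−1}), where M̄₀^{t−1} is the matrix representing ·ℓ̄^{t−1} : B₀ → B_{t−1}. -/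

import Mathlib

open scoped BigOperators

/-- Multiplication by `a` is injective as a map on the subspace `V`. -/
def MulInjOn {k R : Type*} [Field k] [CommRing R] [Algebra k R]
    (V : Submodule k R) (a : R) : Prop :=
  ∀ v ∈ V, a * v = 0 → v = 0

/-- Multiplication by `a` maps the subspace `V` onto the subspace `W`. -/
def MulSurjOnto {k R : Type*} [Field k] [CommRing R] [Algebra k R]
    (V W : Submodule k R) (a : R) : Prop :=
  ∀ w ∈ W, ∃ v ∈ V, a * v = w

/-- The multiplication map `·a : V → W` has full rank: it is injective or surjective. -/
def MulFullRank {k R : Type*} [Field k] [CommRing R] [Algebra k R]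
    (V W : Submodule k R) (a : R) : Prop :=
  MulInjOn V a ∨ MulSurjOnto V W a

/-- `𝒜` is the grading of a standard graded artinian `k`-algebra structure on `R`:
the components form an internal direct sum, vanish in negative degrees, are
multiplicative, the degree-zero part is spanned by `1`, the algebra is generated in
degree one, and `R` is a finite-dimensional `k`-vector space (equivalently, artinian). -/
structure IsStdGradedArtinian (k : Type*) [Field k] (R : Type*) [CommRing R] [Algebra k R]
    (𝒜 : ℤ → Submodule k R) : Prop where
  internal : DirectSum.IsInternal 𝒜
  one_mem : (1 : R) ∈ 𝒜 0
  mul_mem : ∀ {i j : ℤ} {a b : R}, a ∈ 𝒜 i → b ∈ 𝒜 j → a * b ∈ 𝒜 (i + j)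
  neg_bot : ∀ i : ℤ, i < 0 → 𝒜 i = ⊥
  zero_spanOne : 𝒜 0 = Submodule.span k {(1 : R)}
  succ_eq : ∀ i : ℤ, 0 ≤ i → 𝒜 (i + 1) = 𝒜 1 * 𝒜 i
  finiteDim : FiniteDimensional k R

/-- `A` (graded by `ℬ`) is the extension `B ⊗ₖ k[x]/(x^d)` of `B` (graded by `𝒜`):
`φ` is the canonical inclusion of `B`, `x` has degree one with `x^d = 0`, and each
graded component decomposes as `ℬ j = ⊕_{q=0}^{d-1} x^q · φ(𝒜 (j - q))`. -/
structure IsCIExtension {k B A : Type*} [Field k] [CommRing B] [Algebra k B]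
    [CommRing A] [Algebra k A]
    (𝒜 : ℤ → Submodule k B) (ℬ : ℤ → Submodule k A)
    (φ : B →ₐ[k] A) (x : A) (d : ℕ) : Prop where
  map_mem : ∀ (j : ℤ) (b : B), b ∈ 𝒜 j → φ b ∈ ℬ j
  x_mem : x ∈ ℬ 1
  x_pow : x ^ d = 0
  decomp_mem : ∀ (j : ℤ) (f : Fin d → B), (∀ q : Fin d, f q ∈ 𝒜 (j - ((q : ℕ) : ℤ))) →
    (∑ q : Fin d, x ^ (q : ℕ) * φ (f q)) ∈ ℬ j
  decomp_exists : ∀ (j : ℤ), ∀ c ∈ ℬ j, ∃ f : Fin d → B,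
    (∀ q : Fin d, f q ∈ 𝒜 (j - ((q : ℕ) : ℤ))) ∧ c = ∑ q : Fin d, x ^ (q : ℕ) * φ (f q)
  decomp_unique : ∀ (j : ℤ) (f : Fin d → B), (∀ q : Fin d, f q ∈ 𝒜 (j - ((q : ℕ) : ℤ))) →
    (∑ q : Fin d, x ^ (q : ℕ) * φ (f q)) = 0 → ∀ q : Fin d, f q = 0

/-- `A` (graded by `ℬ`) is the extension `B ⊗ₖ k[x₁,…,xₙ]/(x₁^{d₁},…,xₙ^{dₙ})` of `B`
(graded by `𝒜`). -/
structure IsMultiCIExtension {k B A : Type*} [Field k] [CommRing B] [Algebra k B]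
    [CommRing A] [Algebra k A] {n : ℕ}
    (𝒜 : ℤ → Submodule k B) (ℬ : ℤ → Submodule k A)
    (φ : B →ₐ[k] A) (x : Fin n → A) (dv : Fin n → ℕ) : Prop where
  map_mem : ∀ (j : ℤ) (b : B), b ∈ 𝒜 j → φ b ∈ ℬ j
  x_mem : ∀ m : Fin n, x m ∈ ℬ 1
  x_pow : ∀ m : Fin n, x m ^ dv m = 0
  decomp_mem : ∀ (j : ℤ) (f : ((m : Fin n) → Fin (dv m)) → B),
    (∀ e, f e ∈ 𝒜 (j - ∑ m : Fin n, ((e m : ℕ) : ℤ))) →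
    (∑ e : (m : Fin n) → Fin (dv m), (∏ m : Fin n, x m ^ ((e m : ℕ))) * φ (f e)) ∈ ℬ j
  decomp_exists : ∀ (j : ℤ), ∀ c ∈ ℬ j, ∃ f : ((m : Fin n) → Fin (dv m)) → B,
    (∀ e, f e ∈ 𝒜 (j - ∑ m : Fin n, ((e m : ℕ) : ℤ))) ∧
    c = ∑ e : (m : Fin n) → Fin (dv m), (∏ m : Fin n, x m ^ ((e m : ℕ))) * φ (f e)
  decomp_unique : ∀ (j : ℤ) (f : ((m : Fin n) → Fin (dv m)) → B),
    (∀ e, f e ∈ 𝒜 (j - ∑ m : Fin n, ((e m : ℕ) : ℤ))) →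
    (∑ e : (m : Fin n) → Fin (dv m), (∏ m : Fin n, x m ^ ((e m : ℕ))) * φ (f e)) = 0 →
    ∀ e, f e = 0

/-- The weak Lefschetz property. -/
def HasWLP {k R : Type*} [Field k] [CommRing R] [Algebra k R]
    (𝒜 : ℤ → Submodule k R) : Prop :=
  ∃ ℓ ∈ 𝒜 1, ∀ i : ℤ, 0 ≤ i → MulFullRank (𝒜 i) (𝒜 (i + 1)) ℓ

/-- The strong Lefschetz property. -/
def HasSLP {k R : Type*} [Field k] [CommRing R] [Algebra k R]
    (𝒜 : ℤ → Submodule k R) : Prop :=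
  ∃ ℓ ∈ 𝒜 1, ∀ i : ℤ, 0 ≤ i → ∀ t : ℕ, 1 ≤ t → MulFullRank (𝒜 i) (𝒜 (i + t)) (ℓ ^ t)

/-- The Hilbert function of the graded algebra. -/
noncomputable def hilb {k R : Type*} [Field k] [CommRing R] [Algebra k R]
    (𝒜 : ℤ → Submodule k R) (i : ℤ) : ℕ :=
  Module.finrank k (𝒜 i)

/-- The algebra is almost centered. -/
def AlmostCentered {k R : Type*} [Field k] [CommRing R] [Algebra k R]
    (𝒜 : ℤ → Submodule k R) : Prop :=
  ∀ i j : ℤ, i < j →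
    (hilb 𝒜 i < hilb 𝒜 j → ∀ s : ℕ, hilb 𝒜 (i - s) ≤ hilb 𝒜 (j + s)) ∧
    (hilb 𝒜 j < hilb 𝒜 i → ∀ s : ℕ, hilb 𝒜 (j + s) ≤ hilb 𝒜 (i - s))

/-- `binomZ t j` is the binomial coefficient `t` choose `j` for an integer `j`,
equal to `0` for `j < 0` or `j > t`. -/
def binomZ (t : ℕ) (j : ℤ) : ℤ := if 0 ≤ j then (t.choose j.toNat : ℤ) else 0

/-- The `(d-p) × (d-p)` integer matrix `C_{t,p,d}` whose `(r,c)` entry (with `1 ≤ r,c ≤ d-p`)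
is `binom(t, d+1-r-c)`. -/
def Cmat (t p d : ℕ) : Matrix (Fin (d - p)) (Fin (d - p)) ℤ :=
  Matrix.of fun r c => binomZ t ((d : ℤ) - 1 - (r : ℕ) - (c : ℕ))

/-- The characteristic of `k` is zero, or a prime not dividing the integer `N`. -/
def CharCond (k : Type*) [Field k] (N : ℤ) : Prop :=
  CharZero k ∨ ∃ p : ℕ, p.Prime ∧ CharP k p ∧ ¬ ((p : ℤ) ∣ N)


section Statement2Helpers

variable {k B A : Type} [Field k] [CommRing B] [Algebra k B] [CommRing A] [Algebra k A]
variable {𝒜 : ℤ → Submodule k B} {ℬ : ℤ → Submodule k A} {φ : B →ₐ[k] A} {x : A}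

lemma sga_pow_mem (hB : IsStdGradedArtinian k B 𝒜) {ℓ : B} (hℓ : ℓ ∈ 𝒜 1) :
    ∀ s : ℕ, ℓ ^ s ∈ 𝒜 (s : ℤ)
  | 0 => by simpa using hB.one_mem
  | (s+1) => by
      have h := hB.mul_mem (sga_pow_mem hB hℓ s) hℓ
      rw [← pow_succ] at h
      have e : ((s+1:ℕ):ℤ) = (s:ℤ) + 1 := by push_cast; ring
      rw [e]; exact h

lemma sga_bot_up (hB : IsStdGradedArtinian k B 𝒜) {j : ℤ} (hj : 0 ≤ j) (h : 𝒜 j = ⊥) :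
    ∀ s : ℕ, 𝒜 (j + s) = ⊥
  | 0 => by simpa
  | (s+1) => by
      have e : j + ((s+1:ℕ):ℤ) = (j + s) + 1 := by push_cast; ring
      rw [e, hB.succ_eq _ (add_nonneg hj (Int.natCast_nonneg s)), sga_bot_up hB hj h s,
        Submodule.mul_bot]

lemma pow_add_nilsq {R : Type*} [CommRing R] {x : R} (hx : x ^ 2 = 0) (y : R) :
    ∀ t : ℕ, (y + x) ^ (t + 1) = y ^ (t + 1) + (t + 1 : ℕ) • (x * y ^ t)
  | 0 => by simp
  | (t+1) => by
      have ih := pow_add_nilsq hx y t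
      have h2 : (y + x) ^ (t + 1 + 1) = (y + x) ^ (t + 1) * (y + x) := by ring
      rw [h2, ih]
      simp only [nsmul_eq_mul]
      push_cast
      linear_combination ((t:R) + 1) * y ^ t * hx

lemma ci_unique (hext : IsCIExtension 𝒜 ℬ φ x 2) {j : ℤ} {b0 b1 : B}
    (h0 : b0 ∈ 𝒜 j) (h1 : b1 ∈ 𝒜 (j-1)) (h : φ b0 + x * φ b1 = 0) :
    b0 = 0 ∧ b1 = 0 := by
  have hu := hext.decomp_unique j ![b0, b1] ?_ ?_
  · exact ⟨hu 0, hu 1⟩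
  · intro q
    fin_cases q
    · simpa using h0
    · simpa using h1
  · simpa [Fin.sum_univ_two] using h

lemma ci_exists (hext : IsCIExtension 𝒜 ℬ φ x 2) {j : ℤ} {c : A} (hc : c ∈ ℬ j) :
    ∃ b0 ∈ 𝒜 j, ∃ b1 ∈ 𝒜 (j-1), c = φ b0 + x * φ b1 := by
  obtain ⟨f, hf, hsum⟩ := hext.decomp_exists j c hc
  refine ⟨f 0, by simpa using hf 0, f 1, by simpa using hf 1, ?_⟩
  simpa [Fin.sum_univ_two] using hsum

lemma ci_mem (hext : IsCIExtension 𝒜 ℬ φ x 2) {j : ℤ} {b0 b1 : B}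
    (h0 : b0 ∈ 𝒜 j) (h1 : b1 ∈ 𝒜 (j-1)) : φ b0 + x * φ b1 ∈ ℬ j := by
  have hm := hext.decomp_mem j ![b0, b1] ?_
  · simpa [Fin.sum_univ_two] using hm
  · intro q
    fin_cases q
    · simpa using h0
    · simpa using h1

lemma ci_phi_eq_zero (hext : IsCIExtension 𝒜 ℬ φ x 2) {j : ℤ} {b : B}
    (hb : b ∈ 𝒜 j) (h : φ b = 0) : b = 0 :=
  (ci_unique hext hb (zero_mem _) (by simp [h])).1

lemma ci_xphi_eq_zero (hext : IsCIExtension 𝒜 ℬ φ x 2) {j : ℤ} {b : B}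
    (hb : b ∈ 𝒜 (j-1)) (h : x * φ b = 0) : b = 0 :=
  (ci_unique hext (zero_mem _) hb (by simp [h])).2

lemma ci_mul (hext : IsCIExtension 𝒜 ℬ φ x 2) (ℓbar : B) (tm1 : ℕ) (b0 b1 : B) :
    (φ ℓbar + x) ^ (tm1 + 1) * (φ b0 + x * φ b1) =
      φ (ℓbar ^ (tm1+1) * b0) +
        x * φ ((tm1+1 : ℕ) • (ℓbar ^ tm1 * b0) + ℓbar ^ (tm1+1) * b1) := by
  have hx := hext.x_pow
  rw [pow_add_nilsq hx (φ ℓbar) tm1]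
  simp only [map_add, map_mul, map_nsmul, map_pow, nsmul_eq_mul, map_natCast]
  push_cast
  linear_combination (((tm1:A)+1) * φ ℓbar ^ tm1 * φ b1) * hx

end Statement2Helpers

/-- Let `A = B ⊗ₖ k[x]/(x²)`, `ℓ̄ ∈ B₁`, `ℓ = ℓ̄ + x`, `i ≥ 0`,
`t ≥ 1` with `t` invertible in `k`.
(1) `·ℓ^t : A₀ → A_t` has full rank iff `·ℓ̄^{t-1} : B₀ → B_{t-1}` has full rank.
(2) If `i > 0` and `B_{i+t} = 0` then `·ℓ^t : A_i → A_{i+t}` has full rank iff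
`·ℓ̄^{t-1} : B_i → B_{i+t-1}` is surjective.
(3) If `B_t = 0` and `dim_k B_{t-1} = 1` then the `1 × 1` matrix `M₀^t` of
`·ℓ^t : A₀ → A_t` satisfies `det M₀^t = t · det M̄₀^{t-1}`. -/
theorem statement_2 {k B A : Type} [Field k]
    [CommRing B] [Algebra k B] [CommRing A] [Algebra k A]
    (𝒜 : ℤ → Submodule k B) (ℬ : ℤ → Submodule k A)
    (hB : IsStdGradedArtinian k B 𝒜) (hA : IsStdGradedArtinian k A ℬ)
    (φ : B →ₐ[k] A) (x : A) (hext : IsCIExtension 𝒜 ℬ φ x 2)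
    (ℓbar : B) (hℓbar : ℓbar ∈ 𝒜 1)
    (i t : ℕ) (ht : 1 ≤ t) (htinv : (t : k) ≠ 0) :
    (MulFullRank (ℬ 0) (ℬ (t : ℤ)) ((φ ℓbar + x) ^ t) ↔
      MulFullRank (𝒜 0) (𝒜 ((t : ℤ) - 1)) (ℓbar ^ (t - 1)))
    ∧
    (0 < i → 𝒜 ((i : ℤ) + t) = ⊥ →
      (MulFullRank (ℬ (i : ℤ)) (ℬ ((i : ℤ) + t)) ((φ ℓbar + x) ^ t) ↔
        MulSurjOnto (𝒜 (i : ℤ)) (𝒜 ((i : ℤ) + t - 1)) (ℓbar ^ (t - 1))))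
    ∧
    (𝒜 (t : ℤ) = ⊥ → Module.finrank k (𝒜 ((t : ℤ) - 1)) = 1 →
      ∀ (b0 : Module.Basis (Fin 1) k (𝒜 0)) (bt : Module.Basis (Fin 1) k (𝒜 ((t : ℤ) - 1)))
        (M : Matrix (Fin 1) (Fin 1) k) (N : Matrix (Fin 1) (Fin 1) k),
        (∀ c : Fin 1, (φ ℓbar + x) ^ t * φ (b0 c : B) =
            ∑ r : Fin 1, M r c • (x * φ (bt r : B))) →
        (∀ c : Fin 1, ℓbar ^ (t - 1) * (b0 c : B) = ∑ r : Fin 1, N r c • (bt r : B)) →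
        M.det = (t : k) * N.det) := by
  obtain ⟨tm1, rfl⟩ : ∃ m, t = m + 1 := ⟨t - 1, (Nat.succ_pred_eq_of_pos ht).symm⟩
  have hcast : ((tm1+1:ℕ):ℤ) - 1 = (tm1:ℤ) := by push_cast; ring
  have hpow : ∀ s : ℕ, ℓbar ^ s ∈ 𝒜 (s:ℤ) := sga_pow_mem hB hℓbar
  simp only [Nat.add_sub_cancel, hcast, MulFullRank, MulInjOn, MulSurjOnto]
  refine ⟨?part1, ?part2, ?part3⟩
  case part1 =>
    by_cases hz : ℓbar ^ tm1 = 0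
    · have hzt : ℓbar ^ (tm1+1) = 0 := by rw [pow_succ, hz, zero_mul]
      have hlt : (φ ℓbar + x) ^ (tm1+1) = 0 := by
        have h := ci_mul hext ℓbar tm1 1 0
        simpa [hz, hzt] using h
      have phi_all : (∀ v ∈ ℬ (0:ℤ), v = 0) ↔ (∀ v ∈ 𝒜 (0:ℤ), v = 0) := by
        constructor
        · intro h v hv
          exact ci_phi_eq_zero hext hv (h _ (hext.map_mem 0 v hv))
        · intro h c hc
          obtain ⟨c0, h0, c1, h1, rfl⟩ := ci_exists hext hc
          have hb1 : c1 = 0 := by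
            have hbb := hB.neg_bot ((0:ℤ)-1) (by norm_num)
            rw [hbb] at h1; simpa using h1
          rw [h _ h0, hb1]; simp
      have top_all : (∀ w ∈ ℬ ((tm1+1:ℕ):ℤ), w = 0) ↔ (∀ w ∈ 𝒜 (tm1:ℤ), w = 0) := by
        constructor
        · intro h w hw
          have hw' : w ∈ 𝒜 (((tm1+1:ℕ):ℤ) - 1) := by rw [hcast]; exact hw
          have hmem : x * φ w ∈ ℬ ((tm1+1:ℕ):ℤ) := by
            have hm := ci_mem hext (zero_mem (𝒜 ((tm1+1:ℕ):ℤ))) hw'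
            simpa using hm
          exact ci_xphi_eq_zero hext hw' (h _ hmem)
        · intro h c hc
          have hboto : 𝒜 (tm1:ℤ) = ⊥ := (Submodule.eq_bot_iff _).2 h
          have hbott : 𝒜 ((tm1+1:ℕ):ℤ) = ⊥ := by
            have e : ((tm1+1:ℕ):ℤ) = (tm1:ℤ) + 1 := by push_cast; ring
            rw [e, hB.succ_eq _ (Int.natCast_nonneg tm1), hboto, Submodule.mul_bot]
          obtain ⟨c0, h0, c1, h1, rfl⟩ := ci_exists hext hc
          rw [hbott] at h0
          rw [hcast] at h1
          rw [h _ h1, (Submodule.mem_bot k).1 h0]; simp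
      constructor
      · rintro (hI | hS)
        · exact Or.inl fun v hv _ =>
            (phi_all.1 fun w hw => hI w hw (by rw [hlt, zero_mul])) v hv
        · refine Or.inr fun w hw => ⟨0, zero_mem _, ?_⟩
          rw [mul_zero]
          refine ((top_all.1 fun u hu => ?_) w hw).symm
          obtain ⟨v, hv, hveq⟩ := hS u hu
          rw [← hveq, hlt, zero_mul]
      · rintro (hI | hS)
        · exact Or.inl fun v hv _ =>
            (phi_all.2 fun w hw => hI w hw (by rw [hz, zero_mul])) v hv
        · refine Or.inr fun w hw => ⟨0, zero_mem _, ?_⟩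
          rw [mul_zero]
          refine ((top_all.2 fun u hu => ?_) w hw).symm
          obtain ⟨v, hv, hveq⟩ := hS u hu
          rw [← hveq, hz, zero_mul]
    · have hBInj : ∀ v ∈ 𝒜 (0:ℤ), ℓbar ^ tm1 * v = 0 → v = 0 := by
        intro v hv hveq
        rw [hB.zero_spanOne, Submodule.mem_span_singleton] at hv
        obtain ⟨α, rfl⟩ := hv
        rw [mul_smul_comm, mul_one] at hveq
        rcases smul_eq_zero.1 hveq with h | h
        · rw [h, zero_smul]
        · exact absurd h hz
      have hAInj : ∀ v ∈ ℬ (0:ℤ), (φ ℓbar + x) ^ (tm1+1) * v = 0 → v = 0 := by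
        intro v hv hveq
        obtain ⟨c0, h0, c1, h1, rfl⟩ := ci_exists hext hv
        have hb1 : c1 = 0 := by
          have hbb := hB.neg_bot ((0:ℤ)-1) (by norm_num)
          rw [hbb] at h1; simpa using h1
        subst hb1
        rw [ci_mul hext ℓbar tm1 c0 0] at hveq
        simp only [mul_zero, add_zero] at hveq
        have hmem1 : ℓbar ^ (tm1+1) * c0 ∈ 𝒜 ((tm1+1:ℕ):ℤ) := by
          have hm := hB.mul_mem (hpow (tm1+1)) h0
          rwa [add_zero] at hm
        have hmem2 : (tm1+1:ℕ) • (ℓbar ^ tm1 * c0) ∈ 𝒜 (((tm1+1:ℕ):ℤ) - 1) := by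
          rw [hcast]
          refine nsmul_mem ?_ _
          have hm := hB.mul_mem (hpow tm1) h0
          rwa [add_zero] at hm
        have hcomp := (ci_unique hext hmem1 hmem2 hveq).2
        rw [← Nat.cast_smul_eq_nsmul k] at hcomp
        rcases smul_eq_zero.1 hcomp with h | h
        · exact absurd h htinv
        · rw [hBInj c0 h0 h]; simp
      exact ⟨fun _ => Or.inl hBInj, fun _ => Or.inl hAInj⟩
  case part2 =>
    intro hi hbot
    have hkill : ∀ b ∈ 𝒜 (i:ℤ), ℓbar ^ (tm1+1) * b = 0 := by
      intro b hb
      have h := hB.mul_mem (hpow (tm1+1)) hb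
      rw [show ((tm1+1:ℕ):ℤ) + (i:ℤ) = (i:ℤ) + ((tm1+1:ℕ):ℤ) from by ring, hbot] at h
      simpa using h
    constructor
    · rintro (hI | hS)
      · -- injective case
        have h1bot : ∀ b1 ∈ 𝒜 ((i:ℤ)-1), b1 = 0 := by
          intro b1 hb1
          have hb0 : -(((tm1+1:ℕ):k)⁻¹ • (ℓbar * b1)) ∈ 𝒜 (i:ℤ) := by
            have hm := hB.mul_mem hℓbar hb1
            rw [show (1:ℤ) + ((i:ℤ)-1) = (i:ℤ) from by ring] at hm
            exact neg_mem (Submodule.smul_mem _ _ hm)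
          have hveq : (φ ℓbar + x) ^ (tm1+1) *
              (φ (-(((tm1+1:ℕ):k)⁻¹ • (ℓbar * b1))) + x * φ b1) = 0 := by
            rw [ci_mul hext, hkill _ hb0]
            have h2 : (tm1+1:ℕ) • (ℓbar ^ tm1 * -(((tm1+1:ℕ):k)⁻¹ • (ℓbar * b1))) +
                ℓbar ^ (tm1+1) * b1 = 0 := by
              rw [← Nat.cast_smul_eq_nsmul k]
              rw [mul_neg, mul_smul_comm,
                show ℓbar ^ tm1 * (ℓbar * b1) = ℓbar ^ (tm1+1) * b1 from by ring,
                smul_neg, smul_smul, mul_inv_cancel₀ htinv, one_smul, neg_add_cancel]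
            rw [h2]
            simp
          have hv0 := hI _ (ci_mem hext hb0 hb1) hveq
          exact (ci_unique hext hb0 hb1 hv0).2
        have hAbot : 𝒜 ((i:ℤ)-1) = ⊥ := (Submodule.eq_bot_iff _).2 h1bot
        have hi' : (0:ℤ) ≤ (i:ℤ) - 1 := by
          have : (1:ℤ) ≤ (i:ℤ) := by exact_mod_cast hi
          omega
        have hup := sga_bot_up hB hi' hAbot (tm1+1)
        rw [show (i:ℤ) - 1 + ((tm1+1:ℕ):ℤ) = (i:ℤ) + ((tm1+1:ℕ):ℤ) - 1 from by ring] at hup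
        intro w hw
        rw [hup] at hw
        exact ⟨0, zero_mem _, by rw [mul_zero]; exact ((Submodule.mem_bot k).1 hw).symm⟩
      · intro wb hwb
        have hwmem : x * φ wb ∈ ℬ ((i:ℤ) + ((tm1+1:ℕ):ℤ)) := by
          have hm := ci_mem hext (zero_mem (𝒜 ((i:ℤ)+((tm1+1:ℕ):ℤ)))) hwb
          simpa using hm
        obtain ⟨v, hv, hveq⟩ := hS _ hwmem
        obtain ⟨b0, h0, b1, h1, rfl⟩ := ci_exists hext hv
        rw [ci_mul hext, hkill _ h0, map_zero, zero_add] at hveq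
        have hmem2 : (tm1+1:ℕ) • (ℓbar ^ tm1 * b0) + ℓbar ^ (tm1+1) * b1 ∈
            𝒜 ((i:ℤ) + ((tm1+1:ℕ):ℤ) - 1) := by
          refine add_mem ?_ ?_
          · refine nsmul_mem ?_ _
            have hm := hB.mul_mem (hpow tm1) h0
            rwa [show (tm1:ℤ) + (i:ℤ) = (i:ℤ) + ((tm1+1:ℕ):ℤ) - 1 from by push_cast; ring] at hm
          · have hm := hB.mul_mem (hpow (tm1+1)) h1
            rwa [show ((tm1+1:ℕ):ℤ) + ((i:ℤ)-1) = (i:ℤ) + ((tm1+1:ℕ):ℤ) - 1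
              from by push_cast; ring] at hm
        have hsub : φ (0:B) + x * φ (((tm1+1:ℕ) • (ℓbar ^ tm1 * b0) + ℓbar ^ (tm1+1) * b1) - wb)
            = 0 := by
          rw [map_sub, mul_sub, hveq, map_zero]
          ring
        have key := sub_eq_zero.1
          ((ci_unique hext (zero_mem (𝒜 ((i:ℤ)+((tm1+1:ℕ):ℤ)))) (sub_mem hmem2 hwb) hsub).2)
        refine ⟨(tm1+1:ℕ) • b0 + ℓbar * b1, ?_, ?_⟩
        · refine add_mem (nsmul_mem h0 _) ?_
          have hm := hB.mul_mem hℓbar h1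
          rwa [show (1:ℤ) + ((i:ℤ)-1) = (i:ℤ) from by ring] at hm
        · rw [← key, mul_add, mul_smul_comm,
            show ℓbar ^ tm1 * (ℓbar * b1) = ℓbar ^ (tm1+1) * b1 from by ring]
    · intro hsur
      right
      intro w hw
      obtain ⟨b0, h0, b1, h1, rfl⟩ := ci_exists hext hw
      have hb00 : b0 = 0 := by rw [hbot] at h0; simpa using h0
      subst hb00
      obtain ⟨vb, hvb, hvbeq⟩ := hsur b1 h1
      refine ⟨((tm1+1:ℕ):k)⁻¹ • φ vb, Submodule.smul_mem _ _ (hext.map_mem _ _ hvb), ?_⟩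
      rw [mul_smul_comm]
      have hev : (φ ℓbar + x) ^ (tm1+1) * φ vb = (tm1+1:ℕ) • (x * φ b1) := by
        have h := ci_mul hext ℓbar tm1 vb 0
        rw [hkill _ hvb, hvbeq] at h
        simp only [map_zero, mul_zero, add_zero, zero_add, map_nsmul, mul_smul_comm] at h
        exact h
      rw [hev, ← Nat.cast_smul_eq_nsmul k, inv_smul_smul₀ htinv]
      simp
  case part3 =>
    intro hbotT hdim b0b btb M N hM hN
    have hM0 := hM 0
    have hN0 := hN 0
    simp only [Fin.sum_univ_one] at hM0 hN0
    have hx0 : ℓbar ^ (tm1+1) * ((b0b 0 : 𝒜 (0:ℤ)) : B) = 0 := by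
      have h := hB.mul_mem (hpow (tm1+1)) (b0b 0).2
      rw [add_zero, hbotT] at h
      simpa using h
    have hev := ci_mul hext ℓbar tm1 ((b0b 0 : 𝒜 (0:ℤ)) : B) 0
    rw [hx0, hN0] at hev
    simp only [map_zero, mul_zero, add_zero, zero_add, map_nsmul, map_smul,
      mul_smul_comm] at hev
    rw [hM0, ← Nat.cast_smul_eq_nsmul k] at hev
    have hzne : x * φ ((btb 0 : 𝒜 (((tm1+1:ℕ):ℤ)-1)) : B) ≠ 0 := by
      intro h0
      have hbt := ci_xphi_eq_zero hext (btb 0).2 h0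
      exact btb.ne_zero 0 (by ext; simpa using hbt)
    have hdiff : (M 0 0 - ((tm1+1:ℕ):k) * N 0 0) •
        (x * φ ((btb 0 : 𝒜 (((tm1+1:ℕ):ℤ)-1)) : B)) = 0 := by
      rw [sub_smul, hev, smul_smul, sub_self]
    rcases smul_eq_zero.1 hdiff with h | h
    · rw [Matrix.det_fin_one, Matrix.det_fin_one]
      linear_combination sub_eq_zero.1 h
    · exact absurd h hzne
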